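/- Let p be an odd prime, r ≥ 1, and t an integer with t² − 4 ≡ 0 (mod p^r). Then the number of matrices γ ∈ SL₂(Z/p^rZ) with trace γ ≡ t (mod p^r) equals p^{2r} + p^{2r−1} − p^{⌊(3r−1)/2⌋}. -/

import Mathlib

section fiber
variable {α β : Type*} [AddGroup α] [AddGroup β] [Fintype α] [Fintype β] [DecidableEq β]

lemma card_comp_subtype (f : α → β) (hadd : ∀ x y, f (x + y) = f x + f y)
    (hsub : ∀ x y, f (x - y) = f x - f y)
    (hf : Function.Surjective f) (P : β → Prop) [DecidablePred P] :
    Fintype.card {a : α // P (f a)} = Fintype.card {b : β // P b} * Fintype.card {a : α // f a = 0} := by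
  have key : ∀ b : β, Fintype.card {a : α // f a = b} = Fintype.card {a : α // f a = 0} := by
    intro b
    obtain ⟨a₀, ha₀⟩ := hf b
    apply Fintype.card_congr
    refine ⟨fun a => ⟨a.1 - a₀, by rw [hsub, a.2, ha₀, sub_self]⟩,
           fun a => ⟨a.1 + a₀, by rw [hadd, a.2, ha₀, zero_add]⟩, ?_, ?_⟩ <;> intro a <;>
      apply Subtype.ext <;> simp
  simp only [Fintype.card_subtype]
  rw [Finset.card_eq_sum_card_fiberwise (f := fun a => f a) (t := Finset.univ.filter P)
    (by intro x hx; simp only [Finset.coe_filter, Finset.mem_filter, Finset.mem_univ, true_and, Set.mem_setOf_eq] at hx ⊢; exact hx)]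
  have hcongr : ∀ b ∈ Finset.univ.filter P,
      ((Finset.univ.filter fun a => P (f a)).filter fun a => f a = b).card
        = Fintype.card {a : α // f a = 0} := by
    intro b hb
    simp only [Finset.mem_filter, Finset.mem_univ, true_and] at hb
    rw [Finset.filter_filter]
    have h2 : (Finset.univ.filter fun a => P (f a) ∧ f a = b)
        = Finset.univ.filter fun a => f a = b := by
      apply Finset.filter_congr
      intro a _
      constructor
      · exact fun h => h.2
      · exact fun h => ⟨h ▸ hb, h⟩
    rw [h2, ← Fintype.card_subtype, key b]
  rw [Finset.sum_congr rfl hcongr, Finset.sum_const, smul_eq_mul]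
  simp only [Fintype.card_subtype]

lemma card_total_fiber (f : α → β) (hadd : ∀ x y, f (x + y) = f x + f y)
    (hsub : ∀ x y, f (x - y) = f x - f y) (hf : Function.Surjective f) :
    Fintype.card α = Fintype.card β * Fintype.card {a : α // f a = 0} := by
  have h := card_comp_subtype f hadd hsub hf (fun _ => True)
  have e1 : Fintype.card {a : α // True} = Fintype.card α :=
    Fintype.card_congr (Equiv.subtypeUnivEquiv fun _ => trivial)
  have e2 : Fintype.card {b : β // True} = Fintype.card β :=
    Fintype.card_congr (Equiv.subtypeUnivEquiv fun _ => trivial)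
  rw [e1, e2] at h
  exact h

end fiber

lemma card_partition {α : Type*} [Fintype α] (P Q R : α → Prop)
    [DecidablePred P] [DecidablePred Q] [DecidablePred R] :
    Fintype.card {a // P a} =
      Fintype.card {a // P a ∧ ¬ Q a} + Fintype.card {a // P a ∧ Q a ∧ ¬ R a}
        + Fintype.card {a // P a ∧ Q a ∧ R a} := by
  classical
  have h1 : (Finset.univ.filter fun a => P a).card
      = (Finset.univ.filter fun a => P a ∧ Q a).card
        + (Finset.univ.filter fun a => P a ∧ ¬ Q a).card := by
    rw [← Finset.card_filter_add_card_filter_not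
        (s := Finset.univ.filter fun a => P a) (p := Q),
      Finset.filter_filter, Finset.filter_filter]
  have h2 : (Finset.univ.filter fun a => P a ∧ Q a).card
      = (Finset.univ.filter fun a => P a ∧ Q a ∧ R a).card
        + (Finset.univ.filter fun a => P a ∧ Q a ∧ ¬ R a).card := by
    rw [← Finset.card_filter_add_card_filter_not
        (s := Finset.univ.filter fun a => P a ∧ Q a) (p := R),
      Finset.filter_filter, Finset.filter_filter]
    simp only [and_assoc]
  simp only [Fintype.card_subtype]
  omega

lemma zmod_castHom_surjective (m n : ℕ) [NeZero m] [NeZero n] (h : m ∣ n) :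
    Function.Surjective (ZMod.castHom h (ZMod m)) := by
  intro y
  refine ⟨((y.val : ℕ) : ZMod n), ?_⟩
  rw [map_natCast]
  exact ZMod.natCast_rightInverse y

lemma zmod_pi_eq_zero_iff (m n : ℕ) [NeZero m] [NeZero n] (h : m ∣ n) (x : ZMod n) :
    ZMod.castHom h (ZMod m) x = 0 ↔ m ∣ x.val := by
  conv_lhs => rw [← ZMod.natCast_rightInverse x]
  rw [map_natCast]
  exact ZMod.natCast_eq_zero_iff _ _

lemma zmod_isUnit_iff (p k : ℕ) [Fact p.Prime] (hk : k ≠ 0) (b : ZMod (p ^ k)) :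
    IsUnit b ↔ ¬ (ZMod.castHom (dvd_pow_self p hk) (ZMod p) b = 0) := by
  haveI : NeZero (p ^ k) := ⟨pow_ne_zero _ (Nat.Prime.ne_zero Fact.out)⟩
  rw [zmod_pi_eq_zero_iff]
  conv_lhs => rw [← ZMod.natCast_rightInverse b]
  rw [ZMod.isUnit_iff_coprime]
  rw [Nat.coprime_pow_right_iff (Nat.pos_of_ne_zero hk)]
  rw [Nat.coprime_comm]
  exact (Nat.Prime.coprime_iff_not_dvd Fact.out)

section main
variable (p : ℕ) [Fact p.Prime]

lemma mu_iff (r : ℕ) (a b : ℕ) :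
    ((p * a : ℕ) : ZMod (p^(r+2))) = ((p * b : ℕ) : ZMod (p^(r+2)))
      ↔ ((a : ZMod (p^(r+1))) = (b : ZMod (p^(r+1)))) := by
  rw [ZMod.natCast_eq_natCast_iff, ZMod.natCast_eq_natCast_iff]
  rw [Nat.modEq_iff_dvd, Nat.modEq_iff_dvd]
  push_cast
  rw [show ((p:ℤ))^(r+2) = p * p^(r+1) by ring]
  rw [← mul_sub]
  exact mul_dvd_mul_iff_left (by exact_mod_cast Nat.Prime.ne_zero Fact.out)

lemma mu_sq_iff (r : ℕ) (a b c : ℕ) :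
    ((p * a : ℕ) : ZMod (p^(r+2))) * ((p * b : ℕ) : ZMod (p^(r+2))) = ((p * c : ℕ) : ZMod (p^(r+2)))^2
      ↔ ((a : ZMod (p^r)) * (b : ZMod (p^r)) = ((c : ZMod (p^r)))^2) := by
  have h1 : ((p * a : ℕ) : ZMod (p^(r+2))) * ((p * b : ℕ) : ZMod (p^(r+2)))
      = (((p*a) * (p*b) : ℕ) : ZMod (p^(r+2))) := by push_cast; ring
  have h2 : ((p * c : ℕ) : ZMod (p^(r+2)))^2 = (((p*c)*(p*c) : ℕ) : ZMod (p^(r+2))) := by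
    push_cast; ring
  have h3 : ((a : ZMod (p^r)) * (b : ZMod (p^r)) = ((c : ZMod (p^r)))^2)
      ↔ ((a*b : ℕ) : ZMod (p^r)) = ((c*c : ℕ) : ZMod (p^r)) := by
    push_cast
    constructor <;> intro h <;> linear_combination h
  rw [h1, h2, h3, ZMod.natCast_eq_natCast_iff, ZMod.natCast_eq_natCast_iff,
    Nat.modEq_iff_dvd, Nat.modEq_iff_dvd]
  push_cast
  rw [show ((p:ℤ))^(r+2) = (p*p) * p^r by ring,
    show ((c:ℤ))*c - a*b = (c*c - a*b) by ring,
    show ((p:ℤ)*c)*(p*c) - (p*a)*(p*b) = (p*p) * (c*c - a*b) by ring]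
  exact mul_dvd_mul_iff_left (by
    have : (p:ℤ) ≠ 0 := by exact_mod_cast Nat.Prime.ne_zero (Fact.out : p.Prime)
    exact mul_ne_zero this this)

lemma count_step (r : ℕ) :
    Nat.card {v : ZMod (p^(r+2)) × ZMod (p^(r+2)) × ZMod (p^(r+2)) // v.2.1 * v.2.2 = v.1^2}
      = (p^(r+2) * (p^(r+2) - p^(r+1)) + p^(r+1) * (p^(r+2) - p^(r+1)))
        + p^3 * Nat.card {v : ZMod (p^r) × ZMod (p^r) × ZMod (p^r) // v.2.1 * v.2.2 = v.1^2} := by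
  have hpne : p ≠ 0 := Nat.Prime.ne_zero Fact.out
  haveI h0 : NeZero (p^r) := ⟨pow_ne_zero _ hpne⟩
  haveI h1 : NeZero (p^(r+1)) := ⟨pow_ne_zero _ hpne⟩
  haveI h2 : NeZero (p^(r+2)) := ⟨pow_ne_zero _ hpne⟩
  have hdvd1 : p ∣ p^(r+2) := dvd_pow_self p (by omega)
  set π := ZMod.castHom hdvd1 (ZMod p) with hπdef
  set π2 := ZMod.castHom (pow_dvd_pow p (by omega : r ≤ r+1)) (ZMod (p^r)) with hπ2def
  have hπadd : ∀ x y : ZMod (p^(r+2)), π (x + y) = π x + π y := fun x y => map_add π x y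
  have hπsub : ∀ x y : ZMod (p^(r+2)), π (x - y) = π x - π y := fun x y => map_sub π x y
  have hπsurj : Function.Surjective π := zmod_castHom_surjective p (p^(r+2)) _
  -- card of kernel-type subtypes
  have hfibx : Fintype.card {x : ZMod (p^(r+2)) // π x = 0} = p^(r+1) := by
    have h := card_total_fiber (fun x => π x) hπadd hπsub hπsurj
    rw [ZMod.card, ZMod.card] at h
    apply Nat.eq_of_mul_eq_mul_left (Nat.pos_of_ne_zero hpne)
    rw [← h]
    ring
  have hcompl : Fintype.card {x : ZMod (p^(r+2)) // ¬ π x = 0} = p^(r+2) - p^(r+1) := by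
    rw [Fintype.card_subtype_compl, ZMod.card, hfibx]
  have hunit : ∀ b : ZMod (p^(r+2)), ¬ π b = 0 → IsUnit b := fun b hb =>
    (zmod_isUnit_iff p (r+2) (by omega) b).2 hb
  have hx0 : ∀ x b c : ZMod (p^(r+2)), b * c = x^2 → π b = 0 → π x = 0 := by
    intro x b c h hb
    have h' := congrArg π h
    rw [map_mul, map_pow, hb, zero_mul] at h'
    exact (pow_eq_zero_iff (two_ne_zero)).1 h'.symm
  -- case A
  have cardA : Fintype.card {v : ZMod (p^(r+2)) × ZMod (p^(r+2)) × ZMod (p^(r+2)) //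
      (v.2.1 * v.2.2 = v.1^2) ∧ ¬ π v.2.1 = 0} = p^(r+2) * (p^(r+2) - p^(r+1)) := by
    have e : {v : ZMod (p^(r+2)) × ZMod (p^(r+2)) × ZMod (p^(r+2)) //
        (v.2.1 * v.2.2 = v.1^2) ∧ ¬ π v.2.1 = 0}
        ≃ ZMod (p^(r+2)) × {b : ZMod (p^(r+2)) // ¬ π b = 0} := by
      refine ⟨fun v => (v.1.1, ⟨v.1.2.1, v.2.2⟩),
        fun w => ⟨(w.1, w.2.1, (w.2.1)⁻¹ * w.1^2), ?_, w.2.2⟩, ?_, ?_⟩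
      · rw [← mul_assoc, ZMod.mul_inv_of_unit _ (hunit _ w.2.2), one_mul]
      · rintro ⟨⟨x, b, c⟩, hP, hb⟩
        apply Subtype.ext
        have hc : b⁻¹ * x^2 = c := by
          rw [← hP, ← mul_assoc, ZMod.inv_mul_of_unit _ (hunit _ hb), one_mul]
        simp only [hc]
      · intro w
        rfl
    rw [Fintype.card_congr e, Fintype.card_prod, ZMod.card, hcompl]
  -- case B
  have cardB : Fintype.card {v : ZMod (p^(r+2)) × ZMod (p^(r+2)) × ZMod (p^(r+2)) //
      (v.2.1 * v.2.2 = v.1^2) ∧ π v.2.1 = 0 ∧ ¬ π v.2.2 = 0}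
      = p^(r+1) * (p^(r+2) - p^(r+1)) := by
    have e : {v : ZMod (p^(r+2)) × ZMod (p^(r+2)) × ZMod (p^(r+2)) //
        (v.2.1 * v.2.2 = v.1^2) ∧ π v.2.1 = 0 ∧ ¬ π v.2.2 = 0}
        ≃ {x : ZMod (p^(r+2)) // π x = 0} × {c : ZMod (p^(r+2)) // ¬ π c = 0} := by
      refine ⟨fun v => (⟨v.1.1, hx0 v.1.1 v.1.2.1 v.1.2.2 v.2.1 v.2.2.1⟩, ⟨v.1.2.2, v.2.2.2⟩),
        fun w => ⟨(w.1.1, (w.2.1)⁻¹ * w.1.1^2, w.2.1), ?_, ?_, w.2.2⟩, ?_, ?_⟩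
      · rw [mul_comm, ← mul_assoc, ZMod.mul_inv_of_unit _ (hunit _ w.2.2), one_mul]
      · rw [map_mul, map_pow, w.1.2]
        simp
      · rintro ⟨⟨x, b, c⟩, hP, hb, hc⟩
        apply Subtype.ext
        have hbb : c⁻¹ * x^2 = b := by
          rw [← hP, show c⁻¹ * (b * c) = b * (c * c⁻¹) by ring,
            ZMod.mul_inv_of_unit _ (hunit _ hc), mul_one]
        simp only [hbb]
      · intro w
        rfl
    rw [Fintype.card_congr e, Fintype.card_prod, hfibx, hcompl]
  -- case C
  have hπ2v : ∀ y : ZMod (p^(r+1)), π2 y = ((y.val : ℕ) : ZMod (p^r)) := by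
    intro y
    conv_lhs => rw [← ZMod.natCast_zmod_val y]
    rw [map_natCast]
  set μ : ZMod (p^(r+1)) → ZMod (p^(r+2)) := fun y => ((p * y.val : ℕ) : ZMod (p^(r+2))) with hμdef
  have hπμ : ∀ y, π (μ y) = 0 := by
    intro y
    rw [hμdef]
    simp only [map_natCast]
    push_cast
    rw [ZMod.natCast_self, zero_mul]
  have hμmul : ∀ x b c : ZMod (p^(r+1)),
      (μ b * μ c = (μ x)^2) ↔ (π2 b * π2 c = (π2 x)^2) := by
    intro x b c
    rw [hπ2v, hπ2v, hπ2v]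
    exact mu_sq_iff p r b.val c.val x.val
  have hμinj : Function.Injective μ := by
    intro y y' h
    have h2 := (mu_iff p r y.val y'.val).1 h
    rwa [ZMod.natCast_zmod_val, ZMod.natCast_zmod_val] at h2
  have hμsurj : ∀ x : ZMod (p^(r+2)), π x = 0 → ∃ y, μ y = x := by
    intro x hx
    have hdvd : p ∣ x.val := (zmod_pi_eq_zero_iff p (p^(r+2)) _ x).1 hx
    refine ⟨((x.val / p : ℕ) : ZMod (p^(r+1))), ?_⟩
    have hlt : x.val / p < p^(r+1) := by
      apply Nat.div_lt_of_lt_mul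
      have := ZMod.val_lt x
      calc x.val < p^(r+2) := this
        _ = p * p^(r+1) := by ring
    rw [hμdef]
    simp only
    rw [ZMod.val_cast_of_lt hlt, Nat.mul_div_cancel' hdvd, ZMod.natCast_zmod_val]
  set f3 : (ZMod (p^(r+1)) × ZMod (p^(r+1)) × ZMod (p^(r+1)))
      → (ZMod (p^r) × ZMod (p^r) × ZMod (p^r)) :=
    fun w => (π2 w.1, π2 w.2.1, π2 w.2.2) with hf3def
  have cardC : Fintype.card {v : ZMod (p^(r+2)) × ZMod (p^(r+2)) × ZMod (p^(r+2)) //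
      (v.2.1 * v.2.2 = v.1^2) ∧ π v.2.1 = 0 ∧ π v.2.2 = 0}
      = p^3 * Fintype.card {u : ZMod (p^r) × ZMod (p^r) × ZMod (p^r) // u.2.1 * u.2.2 = u.1^2} := by
    have ebij : Function.Bijective (fun (w : {w : ZMod (p^(r+1)) × ZMod (p^(r+1)) × ZMod (p^(r+1)) //
        (f3 w).2.1 * (f3 w).2.2 = (f3 w).1^2}) =>
        (⟨(μ w.1.1, μ w.1.2.1, μ w.1.2.2), (hμmul w.1.1 w.1.2.1 w.1.2.2).2 w.2,
          hπμ _, hπμ _⟩ : {v : ZMod (p^(r+2)) × ZMod (p^(r+2)) × ZMod (p^(r+2)) //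
        (v.2.1 * v.2.2 = v.1^2) ∧ π v.2.1 = 0 ∧ π v.2.2 = 0})) := by
      constructor
      · rintro ⟨⟨x, b, c⟩, hw⟩ ⟨⟨x', b', c'⟩, hw'⟩ h
        simp only [Subtype.mk.injEq, Prod.mk.injEq] at h
        apply Subtype.ext
        simp only [Prod.mk.injEq]
        exact ⟨hμinj h.1, hμinj h.2.1, hμinj h.2.2⟩
      · rintro ⟨⟨x, b, c⟩, hP, hb, hc⟩
        obtain ⟨yb, hyb⟩ := hμsurj b hb
        obtain ⟨yc, hyc⟩ := hμsurj c hc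
        obtain ⟨yx, hyx⟩ := hμsurj x (hx0 x b c hP hb)
        refine ⟨⟨(yx, yb, yc), (hμmul yx yb yc).1 (by rw [hyx, hyb, hyc]; exact hP)⟩, ?_⟩
        apply Subtype.ext
        simp only [Prod.mk.injEq]
        exact ⟨hyx, hyb, hyc⟩
    have hcongr := (Fintype.card_congr (Equiv.ofBijective _ ebij))
    rw [← hcongr]
    have hf3add : ∀ x y, f3 (x + y) = f3 x + f3 y := by
      intro x y
      rw [hf3def]
      simp only [Prod.fst_add, Prod.snd_add, map_add, Prod.mk_add_mk]
    have hf3sub : ∀ x y, f3 (x - y) = f3 x - f3 y := by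
      intro x y
      rw [hf3def]
      simp only [Prod.fst_sub, Prod.snd_sub, map_sub, Prod.mk_sub_mk]
    have hf3surj : Function.Surjective f3 := by
      rintro ⟨a, b, c⟩
      obtain ⟨a', ha⟩ := zmod_castHom_surjective (p^r) (p^(r+1)) (pow_dvd_pow p (by omega)) a
      obtain ⟨b', hb⟩ := zmod_castHom_surjective (p^r) (p^(r+1)) (pow_dvd_pow p (by omega)) b
      obtain ⟨c', hc⟩ := zmod_castHom_surjective (p^r) (p^(r+1)) (pow_dvd_pow p (by omega)) c
      exact ⟨(a', b', c'), by rw [hf3def]; simp only [Prod.mk.injEq]; exact ⟨ha, hb, hc⟩⟩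
    have hker : Fintype.card {w // f3 w = 0} = p^3 := by
      have h := card_total_fiber f3 hf3add hf3sub hf3surj
      simp only [Fintype.card_prod, ZMod.card] at h
      apply Nat.eq_of_mul_eq_mul_left (show 0 < p^r * (p^r * p^r) by positivity)
      rw [← h]
      ring
    have hmain := card_comp_subtype f3 hf3add hf3sub hf3surj
      (fun u => u.2.1 * u.2.2 = u.1^2)
    rw [hmain, hker]
    ring
  -- assemble
  rw [Nat.card_eq_fintype_card, Nat.card_eq_fintype_card]
  rw [card_partition (fun v : ZMod (p^(r+2)) × ZMod (p^(r+2)) × ZMod (p^(r+2)) =>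
      v.2.1 * v.2.2 = v.1^2) (fun v => π v.2.1 = 0) (fun v => π v.2.2 = 0)]
  rw [cardA, cardB, cardC]

end main
section bases
variable (p : ℕ) [Fact p.Prime]

lemma count_base0 :
    Nat.card {v : ZMod (p^0) × ZMod (p^0) × ZMod (p^0) // v.2.1 * v.2.2 = v.1^2} = 1 := by
  haveI : Subsingleton (ZMod (p^0)) := by rw [pow_zero]; infer_instance
  have hall : ∀ v : ZMod (p^0) × ZMod (p^0) × ZMod (p^0), v.2.1 * v.2.2 = v.1^2 := fun v =>
    Subsingleton.elim _ _
  rw [Nat.card_congr (Equiv.subtypeUnivEquiv hall)]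
  simp [Nat.card_prod, pow_zero]

lemma card_partition2 {α : Type*} [Fintype α] (P Q : α → Prop)
    [DecidablePred P] [DecidablePred Q] :
    Fintype.card {a // P a} =
      Fintype.card {a // P a ∧ ¬ Q a} + Fintype.card {a // P a ∧ Q a} := by
  classical
  have h1 : (Finset.univ.filter fun a => P a).card
      = (Finset.univ.filter fun a => P a ∧ Q a).card
        + (Finset.univ.filter fun a => P a ∧ ¬ Q a).card := by
    rw [← Finset.card_filter_add_card_filter_not
        (s := Finset.univ.filter fun a => P a) (p := Q),
      Finset.filter_filter, Finset.filter_filter]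
  simp only [Fintype.card_subtype]
  omega

lemma count_base1 :
    Nat.card {v : ZMod p × ZMod p × ZMod p // v.2.1 * v.2.2 = v.1^2} = p^2 := by
  have hp1 : 1 ≤ p := (Fact.out : p.Prime).one_lt.le
  rw [Nat.card_eq_fintype_card]
  rw [card_partition2 (fun v : ZMod p × ZMod p × ZMod p => v.2.1 * v.2.2 = v.1^2)
    (fun v => v.2.1 = 0)]
  have cardA : Fintype.card {v : ZMod p × ZMod p × ZMod p //
      (v.2.1 * v.2.2 = v.1^2) ∧ ¬ v.2.1 = 0} = p * (p - 1) := by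
    have e : {v : ZMod p × ZMod p × ZMod p // (v.2.1 * v.2.2 = v.1^2) ∧ ¬ v.2.1 = 0}
        ≃ ZMod p × {b : ZMod p // ¬ b = 0} := by
      refine ⟨fun v => (v.1.1, ⟨v.1.2.1, v.2.2⟩),
        fun w => ⟨(w.1, w.2.1, (w.2.1)⁻¹ * w.1^2), ?_, w.2.2⟩, ?_, ?_⟩
      · rw [← mul_assoc, mul_inv_cancel₀ w.2.2, one_mul]
      · rintro ⟨⟨x, b, c⟩, hP, hb⟩
        apply Subtype.ext
        have hc : b⁻¹ * x^2 = c := by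
          rw [← hP, ← mul_assoc, inv_mul_cancel₀ hb, one_mul]
        simp only [hc]
      · intro w; rfl
    rw [Fintype.card_congr e, Fintype.card_prod, ZMod.card,
      Fintype.card_subtype_compl, ZMod.card, Fintype.card_subtype_eq]
  have cardB : Fintype.card {v : ZMod p × ZMod p × ZMod p //
      (v.2.1 * v.2.2 = v.1^2) ∧ v.2.1 = 0} = p := by
    have e : {v : ZMod p × ZMod p × ZMod p // (v.2.1 * v.2.2 = v.1^2) ∧ v.2.1 = 0}
        ≃ ZMod p := by
      refine ⟨fun v => v.1.2.2, fun c => ⟨(0, 0, c), by simp, rfl⟩, ?_, ?_⟩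
      · rintro ⟨⟨x, b, c⟩, hP, hb⟩
        apply Subtype.ext
        have hb' : b = 0 := hb
        have hx : x = 0 := by
          have hx2 : x^2 = 0 := by rw [← hP, hb, zero_mul]
          exact (pow_eq_zero_iff two_ne_zero).1 hx2
        simp only [hx, hb']
      · intro c; rfl
    rw [Fintype.card_congr e, ZMod.card]
  rw [cardA, cardB]
  obtain ⟨m, rfl⟩ : ∃ m, p = m + 1 := ⟨p - 1, by omega⟩
  simp only [Nat.add_sub_cancel]
  ring

end bases
section key
variable (p : ℕ) [Fact p.Prime]

lemma count_key : ∀ r : ℕ,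
    Nat.card {v : ZMod (p^r) × ZMod (p^r) × ZMod (p^r) // v.2.1 * v.2.2 = v.1^2}
      = p^(2*r) + p^(2*r-1) - p^((3*r-1)/2) := by
  have hp1 : 1 ≤ p := (Fact.out : p.Prime).one_lt.le
  intro r
  induction r using Nat.strong_induction_on with
  | _ r ih =>
    match r with
    | 0 =>
      rw [count_base0 p]
      norm_num
    | 1 =>
      have h := count_base1 p
      have e1 : Nat.card {v : ZMod (p^1) × ZMod (p^1) × ZMod (p^1) // v.2.1 * v.2.2 = v.1^2}
          = Nat.card {v : ZMod p × ZMod p × ZMod p // v.2.1 * v.2.2 = v.1^2} := by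
        rw [pow_one]
      rw [e1, h]
      norm_num
    | (s+2) =>
      rw [count_step p s, ih s (by omega)]
      obtain hs | hs : s = 0 ∨ 1 ≤ s := by omega
      · subst hs
        norm_num
        have hb1 : p ≤ p^2 := by
          calc p = p^1 := (pow_one p).symm
          _ ≤ p^2 := Nat.pow_le_pow_right hp1 (by omega)
        have hb2 : p^((3*(0+2)-1)/2) ≤ p^(2*(0+2)) + p^(2*(0+2)-1) := by
          refine le_trans (Nat.pow_le_pow_right hp1 (by omega : (3*(0+2)-1)/2 ≤ 2*(0+2)-1)) ?_
          omega
        norm_num at hb2 ⊢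
        zify [hb1, hb2]
        ring
      · obtain ⟨k, rfl | rfl⟩ : ∃ k, s = 2*k+1 ∨ s = 2*k+2 := ⟨(s-1)/2, by omega⟩
        · rw [show 2*(2*k+1)-1 = 4*k+1 by omega, show (3*(2*k+1)-1)/2 = 3*k+1 by omega,
            show 2*(2*k+1+2)-1 = 4*k+5 by omega, show (3*(2*k+1+2)-1)/2 = 3*k+4 by omega,
            show 2*(2*k+1+2) = 4*k+6 by omega, show 2*(2*k+1) = 4*k+2 by omega]
          have hb1 : p^(2*k+1+1) ≤ p^(2*k+1+2) := Nat.pow_le_pow_right hp1 (by omega)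
          have hb2 : p^(3*k+1) ≤ p^(4*k+2) + p^(4*k+1) :=
            le_trans (Nat.pow_le_pow_right hp1 (show 3*k+1 ≤ 4*k+1 by omega)) (Nat.le_add_left _ _)
          have hb3 : p^(3*k+4) ≤ p^(4*k+6) + p^(4*k+5) :=
            le_trans (Nat.pow_le_pow_right hp1 (show 3*k+4 ≤ 4*k+5 by omega)) (Nat.le_add_left _ _)
          zify [hb1, hb2, hb3]
          ring
        · rw [show 2*(2*k+2)-1 = 4*k+3 by omega, show (3*(2*k+2)-1)/2 = 3*k+2 by omega,
            show 2*(2*k+2+2)-1 = 4*k+7 by omega, show (3*(2*k+2+2)-1)/2 = 3*k+5 by omega,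
            show 2*(2*k+2+2) = 4*k+8 by omega, show 2*(2*k+2) = 4*k+4 by omega]
          have hb1 : p^(2*k+2+1) ≤ p^(2*k+2+2) := Nat.pow_le_pow_right hp1 (by omega)
          have hb2 : p^(3*k+2) ≤ p^(4*k+4) + p^(4*k+3) :=
            le_trans (Nat.pow_le_pow_right hp1 (show 3*k+2 ≤ 4*k+3 by omega)) (Nat.le_add_left _ _)
          have hb3 : p^(3*k+5) ≤ p^(4*k+8) + p^(4*k+7) :=
            le_trans (Nat.pow_le_pow_right hp1 (show 3*k+5 ≤ 4*k+7 by omega)) (Nat.le_add_left _ _)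
          zify [hb1, hb2, hb3]
          ring

end key
theorem stmt_8 (p : ℕ) [Fact p.Prime] (hp : Odd p) (r : ℕ) (hr : 1 ≤ r) (t : ℤ)
    (ht : (p : ℤ) ^ r ∣ t ^ 2 - 4) :
    Nat.card {γ : Matrix.SpecialLinearGroup (Fin 2) (ZMod (p ^ r)) //
        Matrix.trace (γ : Matrix (Fin 2) (Fin 2) (ZMod (p ^ r))) = (t : ZMod (p ^ r))}
      = p ^ (2 * r) + p ^ (2 * r - 1) - p ^ ((3 * r - 1) / 2) := by
  have hpne : p ≠ 0 := Nat.Prime.ne_zero Fact.out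
  haveI : NeZero (p ^ r) := ⟨pow_ne_zero _ hpne⟩
  have hp2 : p ≠ 2 := by
    rintro rfl
    rw [Nat.odd_iff] at hp
    norm_num at hp
  have h2 : IsUnit (2 : ZMod (p ^ r)) := by
    have h22 : ((2 : ℕ) : ZMod (p ^ r)) = (2 : ZMod (p ^ r)) := by norm_num
    rw [← h22, ZMod.isUnit_iff_coprime]
    apply Nat.Coprime.pow_right
    exact (Nat.coprime_primes Nat.prime_two Fact.out).2 (fun h => hp2 h.symm)
  obtain ⟨w, hw⟩ := h2
  set u : ZMod (p ^ r) := (t : ZMod (p ^ r)) * ↑w⁻¹ with hu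
  have h2u : 2 * u = (t : ZMod (p ^ r)) := by
    rw [hu, ← hw, show ((w : ZMod (p^r)) * ((t : ZMod (p^r)) * ↑w⁻¹))
      = (t : ZMod (p^r)) * (↑w * ↑w⁻¹) by ring, w.mul_inv, mul_one]
  have ht4 : ((t : ZMod (p ^ r)))^2 = 4 := by
    have hz : ((t^2 - 4 : ℤ) : ZMod (p ^ r)) = 0 := by
      rw [ZMod.intCast_zmod_eq_zero_iff_dvd]
      push_cast
      exact ht
    push_cast at hz
    rw [sub_eq_zero] at hz
    exact hz
  have hu2 : u^2 = 1 := by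
    have h4 : ((w : ZMod (p ^ r)))^2 = 4 := by rw [hw]; norm_num
    calc u^2 = ((t : ZMod (p ^ r)))^2 * (↑w⁻¹)^2 := by rw [hu]; ring
    _ = ((w : ZMod (p ^ r)))^2 * (↑w⁻¹)^2 := by rw [ht4, h4]
    _ = 1 := by rw [← mul_pow, w.mul_inv, one_pow]
  have e : {γ : Matrix.SpecialLinearGroup (Fin 2) (ZMod (p ^ r)) //
        Matrix.trace (γ : Matrix (Fin 2) (Fin 2) (ZMod (p ^ r))) = (t : ZMod (p ^ r))}
      ≃ {v : ZMod (p^r) × ZMod (p^r) × ZMod (p^r) // v.2.1 * v.2.2 = v.1^2} := by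
    refine ⟨fun γ => ⟨(((γ.1 : Matrix (Fin 2) (Fin 2) (ZMod (p^r))) 0 0 - u,
        -((γ.1 : Matrix (Fin 2) (Fin 2) (ZMod (p^r))) 0 1),
        (γ.1 : Matrix (Fin 2) (Fin 2) (ZMod (p^r))) 1 0)), ?_⟩,
      fun v => ⟨⟨!![v.1.1 + u, -v.1.2.1; v.1.2.2, u - v.1.1], ?_⟩, ?_⟩, ?_, ?_⟩
    · -- -(γ01) * γ10 = (γ00 - u)^2
      obtain ⟨⟨M, hdet⟩, htr⟩ := γ
      rw [Matrix.det_fin_two] at hdet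
      rw [Matrix.trace_fin_two] at htr
      have htr' : M 0 0 + M 1 1 = 2 * u := by rw [htr, h2u]
      simp only
      linear_combination hdet - (M 0 0) * htr' - hu2
    · -- det = 1
      rw [Matrix.det_fin_two_of]
      linear_combination v.2 + hu2
    · -- trace = t
      show Matrix.trace !![v.1.1 + u, -v.1.2.1; v.1.2.2, u - v.1.1] = (t : ZMod (p ^ r))
      rw [Matrix.trace_fin_two_of, ← h2u]
      ring
    · rintro ⟨⟨M, hdet⟩, htr⟩
      rw [Matrix.trace_fin_two] at htr
      apply Subtype.ext
      apply Subtype.ext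
      show !![(M 0 0 - u) + u, -(-(M 0 1)); M 1 0, u - (M 0 0 - u)] = M
      have h11 : u - (M 0 0 - u) = M 1 1 := by
        have htr' : M 0 0 + M 1 1 = 2 * u := by rw [htr, h2u]
        linear_combination -htr'
      ext i j
      fin_cases i <;> fin_cases j <;> simp [h11]
    · rintro ⟨⟨x, b, c⟩, hP⟩
      apply Subtype.ext
      show ((!![x + u, -b; c, u - x] : Matrix (Fin 2) (Fin 2) (ZMod (p^r))) 0 0 - u,
        -((!![x + u, -b; c, u - x] : Matrix (Fin 2) (Fin 2) (ZMod (p^r))) 0 1),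
        (!![x + u, -b; c, u - x] : Matrix (Fin 2) (Fin 2) (ZMod (p^r))) 1 0) = (x, b, c)
      simp
  rw [Nat.card_congr e, count_key p r]
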